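/- Let R be a commutative local noetherian ring with maximal ideal m and Λ a module-finite R-algebra. The map T ↦ T ∩ mod(Λ/mΛ) is a bijection from the set of torsion classes of fl Λ (the category of finite-length Λ-modules) to the set of torsion classes of mod(Λ/mΛ), with inverse T' ↦ T_Λ(T'), the smallest torsion class of fl Λ containing T'. -/

import Mathlib

universe u

open IsLocalRing

variable (R : Type u) [CommRing R] [IsNoetherianRing R] [IsLocalRing R]
variable (Λ : Type u) [Ring Λ] [Algebra R Λ] [Module.Finite R Λ]

/-- `X` is annihilated by `mΛ`, i.e. `X` is a module over `Λ/mΛ`. -/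
def AnnihilatedByM (X : ModuleCat.{u} Λ) : Prop :=
  ∀ r ∈ maximalIdeal R, ∀ x : X, (algebraMap R Λ r) • x = 0

/-- `T` is a torsion class of `fl Λ`, the category of finite length `Λ`-modules:
all members have finite length, and `T` is closed under factor modules and
extensions. -/
def IsTorsionClassFL (T : Set (ModuleCat.{u} Λ)) : Prop :=
  (∀ X ∈ T, IsFiniteLength Λ X) ∧
  (∀ X ∈ T, ∀ Y : ModuleCat.{u} Λ, ∀ p : X →ₗ[Λ] Y, Function.Surjective p → Y ∈ T) ∧
  (∀ X ∈ T, ∀ Z ∈ T, ∀ Y : ModuleCat.{u} Λ, ∀ (i : X →ₗ[Λ] Y) (p : Y →ₗ[Λ] Z),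
    Function.Injective i → Function.Surjective p →
    LinearMap.range i = LinearMap.ker p → Y ∈ T)

/-- `T` is a torsion class of `mod (Λ/mΛ)`, realized as the full subcategory of
finitely generated `Λ`-modules annihilated by `mΛ`: all members are finitely
generated and annihilated by `m`, and `T` is closed under factor modules and
extensions within this subcategory. -/
def IsTorsionClassModQuot (T : Set (ModuleCat.{u} Λ)) : Prop :=
  (∀ X ∈ T, Module.Finite Λ X ∧ AnnihilatedByM R Λ X) ∧
  (∀ X ∈ T, ∀ Y : ModuleCat.{u} Λ, ∀ p : X →ₗ[Λ] Y, Function.Surjective p → Y ∈ T) ∧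
  (∀ X ∈ T, ∀ Z ∈ T, ∀ Y : ModuleCat.{u} Λ, AnnihilatedByM R Λ Y →
    ∀ (i : X →ₗ[Λ] Y) (p : Y →ₗ[Λ] Z),
    Function.Injective i → Function.Surjective p →
    LinearMap.range i = LinearMap.ker p → Y ∈ T)

/-! ### Auxiliary material -/

section TCAux

set_option linter.unusedSectionVars false
set_option maxHeartbeats 1000000

variable {M M₂ : Type u} [AddCommGroup M] [Module Λ M] [AddCommGroup M₂] [Module Λ M₂]

/-- The submodule `m • N` of a `Λ`-module. -/
def mSmul (N : Submodule Λ M) : Submodule Λ M :=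
  Submodule.span Λ {y | ∃ r ∈ maximalIdeal R, ∃ x ∈ N, algebraMap R Λ r • x = y}

lemma smul_mem_mSmul {N : Submodule Λ M} {r : R} (hr : r ∈ maximalIdeal R) {x : M}
    (hx : x ∈ N) : algebraMap R Λ r • x ∈ mSmul R Λ N :=
  Submodule.subset_span ⟨r, hr, x, hx, rfl⟩

lemma mSmul_le (N : Submodule Λ M) : mSmul R Λ N ≤ N := by
  rw [mSmul, Submodule.span_le]
  rintro y ⟨r, _, x, hx, rfl⟩
  exact N.smul_mem _ hx

lemma central_smul (r : R) (c : Λ) (x : M) :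
    c • (algebraMap R Λ r • x) = algebraMap R Λ r • (c • x) := by
  rw [← mul_smul, ← mul_smul, Algebra.commutes r c]

lemma map_mSmul_le (N : Submodule Λ M) (f : M →ₗ[Λ] M₂) :
    (mSmul R Λ N).map f ≤ mSmul R Λ (N.map f) := by
  rw [mSmul, Submodule.map_span, Submodule.span_le]
  rintro y ⟨z, ⟨r, hr, x, hx, rfl⟩, rfl⟩
  exact Submodule.subset_span ⟨r, hr, f x, ⟨x, hx, rfl⟩, (f.map_smul _ _).symm⟩

lemma mSmul_mono {N N' : Submodule Λ M} (h : N ≤ N') : mSmul R Λ N ≤ mSmul R Λ N' := by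
  rw [mSmul, Submodule.span_le]
  rintro y ⟨r, hr, x, hx, rfl⟩
  exact smul_mem_mSmul R Λ hr (h hx)

lemma mSmul_top_map (f : M →ₗ[Λ] M₂) (hf : Function.Surjective f) :
    (mSmul R Λ (⊤ : Submodule Λ M)).map f = mSmul R Λ (⊤ : Submodule Λ M₂) := by
  refine le_antisymm ((map_mSmul_le R Λ _ f).trans (mSmul_mono R Λ le_top)) ?_
  rw [mSmul, Submodule.span_le]
  rintro y ⟨r, hr, x, -, rfl⟩
  obtain ⟨w, rfl⟩ := hf x
  exact ⟨algebraMap R Λ r • w, smul_mem_mSmul R Λ hr trivial, f.map_smul _ _⟩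

/-- The submodule `mM` of a `Λ`-module `M`. -/
abbrev mTop (M : Type u) [AddCommGroup M] [Module Λ M] : Submodule Λ M :=
  mSmul R Λ (⊤ : Submodule Λ M)

lemma mTop_map (f : M →ₗ[Λ] M₂) (hf : Function.Surjective f) :
    (mTop R Λ M).map f = mTop R Λ M₂ :=
  mSmul_top_map R Λ f hf

lemma mTop_le_comap (f : M →ₗ[Λ] M₂) : mTop R Λ M ≤ (mTop R Λ M₂).comap f := fun x hx =>
  (map_mSmul_le R Λ ⊤ f).trans (mSmul_mono R Λ le_top) (Submodule.mem_map_of_mem hx)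

lemma ann_mQuot : ∀ r ∈ maximalIdeal R, ∀ y : M ⧸ mTop R Λ M, algebraMap R Λ r • y = 0 := by
  intro r hr y
  obtain ⟨z, rfl⟩ := Submodule.Quotient.mk_surjective _ y
  show Submodule.Quotient.mk (algebraMap R Λ r • z) = (0 : M ⧸ mTop R Λ M)
  rw [Submodule.Quotient.mk_eq_zero]
  exact smul_mem_mSmul R Λ hr trivial

/-- The filtration `m^i M`. -/
def mPow : ℕ → Submodule Λ M
  | 0 => ⊤
  | i + 1 => mSmul R Λ (mPow i)

lemma mPow_antitone : Antitone (mPow R Λ (M := M)) :=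
  antitone_nat_of_succ_le (fun _ => mSmul_le R Λ _)

/-- Elements of `mSmul N` are sums of multiples of generators of `m`. -/
lemma mSmul_rep {k : ℕ} {r : Fin k → R} (hr : Submodule.span R (Set.range r) = maximalIdeal R)
    (N : Submodule Λ M) {y : M} (hy : y ∈ mSmul R Λ N) :
    ∃ v : Fin k → M, (∀ j, v j ∈ N) ∧ y = ∑ j, algebraMap R Λ (r j) • v j := by
  let S : Submodule Λ M :=
    { carrier := {y | ∃ v : Fin k → M, (∀ j, v j ∈ N) ∧ y = ∑ j, algebraMap R Λ (r j) • v j}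
      zero_mem' := ⟨0, fun _ => N.zero_mem, by simp⟩
      add_mem' := by
        rintro a b ⟨v, hv, rfl⟩ ⟨w, hw, rfl⟩
        exact ⟨v + w, fun j => N.add_mem (hv j) (hw j), by
          rw [← Finset.sum_add_distrib]; simp [smul_add]⟩
      smul_mem' := by
        rintro c a ⟨v, hv, rfl⟩
        refine ⟨fun j => c • v j, fun j => N.smul_mem c (hv j), ?_⟩
        rw [Finset.smul_sum]
        exact Finset.sum_congr rfl fun j _ => central_smul R Λ _ _ _ }
  suffices h : mSmul R Λ N ≤ S from h hy
  rw [mSmul, Submodule.span_le]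
  rintro y ⟨s, hs, x, hx, rfl⟩
  rw [← hr] at hs
  obtain ⟨c, rfl⟩ := (Submodule.mem_span_range_iff_exists_fun R).mp hs
  refine ⟨fun j => algebraMap R Λ (c j) • x, fun j => N.smul_mem _ hx, ?_⟩
  rw [map_sum, Finset.sum_smul]
  refine Finset.sum_congr rfl fun j _ => ?_
  rw [smul_eq_mul, map_mul, mul_smul, central_smul]

/-- A finitely generated `Λ`-module annihilated by `m` has finite length. -/
lemma isFiniteLength_of_ann [Module.Finite Λ M]
    (hann : ∀ r ∈ maximalIdeal R, ∀ x : M, algebraMap R Λ r • x = 0) :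
    IsFiniteLength Λ M := by
  letI modR : Module R M := Module.compHom M (algebraMap R Λ)
  haveI : IsScalarTower R Λ M :=
    ⟨fun r c x => by
      show (r • c) • x = algebraMap R Λ r • (c • x)
      rw [Algebra.smul_def, mul_smul]⟩
  haveI : Module.Finite R M := Module.Finite.trans Λ M
  haveI hnoe : IsNoetherian R M := inferInstance
  obtain ⟨n, f, hf⟩ := Module.Finite.exists_fin' R M
  let K : Submodule R (Fin n → R) := Submodule.pi Set.univ (fun _ => maximalIdeal R)
  have hker : K ≤ LinearMap.ker f := by
    classical
    intro v hv
    have : v = ∑ j, v j • (Pi.single j (1 : R) : Fin n → R) := by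
      ext j; simp [Pi.single_apply, Finset.sum_apply]
    rw [LinearMap.mem_ker, this, map_sum]
    refine Finset.sum_eq_zero fun j _ => ?_
    rw [f.map_smul]
    exact hann (v j) (hv j trivial) (f (Pi.single j 1))
  haveI : IsSimpleModule R (R ⧸ maximalIdeal R) :=
    isSimpleModule_iff_isCoatom.mpr (Ideal.isMaximal_def.mp (maximalIdeal.isMaximal R))
  haveI : Finite (Submodule R (R ⧸ maximalIdeal R)) := by
    classical exact Finite.of_equiv _ IsSimpleOrder.equivBool.symm
  haveI : IsArtinian R (R ⧸ maximalIdeal R) := inferInstance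
  haveI : IsArtinian R (Fin n → R ⧸ maximalIdeal R) := inferInstance
  haveI : IsArtinian R ((Fin n → R) ⧸ K) := by
    classical
    exact (Submodule.quotientPi (fun _ : Fin n => maximalIdeal R)).isArtinian_iff.mpr
      inferInstance
  haveI : IsArtinian R M := by
    refine isArtinian_of_surjective _ (K.liftQ f hker) ?_
    intro x
    obtain ⟨v, rfl⟩ := hf x
    exact ⟨K.mkQ v, by simp⟩
  haveI : IsNoetherian Λ M := isNoetherian_of_tower R hnoe
  haveI : IsArtinian Λ M := isArtinian_of_tower R ‹IsArtinian R M›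
  exact isFiniteLength_iff_isNoetherian_isArtinian.mpr ⟨‹_›, ‹_›⟩

/-- Nakayama: the filtration `m^i M` of a finite length module reaches `⊥`. -/
lemma mPow_eq_bot (hfl : IsFiniteLength Λ M) : ∃ n, mPow R Λ (M := M) n = ⊥ := by
  obtain ⟨hnoe, hart⟩ := isFiniteLength_iff_isNoetherian_isArtinian.mp hfl
  obtain ⟨n, hn⟩ := IsArtinian.monotone_stabilizes
    (⟨fun i => OrderDual.toDual (mPow R Λ (M := M) i),
      fun i j hij => mPow_antitone R Λ hij⟩ : ℕ →o (Submodule Λ M)ᵒᵈ)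
  have hstab : mPow R Λ (M := M) n = mSmul R Λ (mPow R Λ n) := hn (n+1) (Nat.le_succ n)
  letI modR : Module R M := Module.compHom M (algebraMap R Λ)
  haveI : IsScalarTower R Λ M :=
    ⟨fun r c x => by
      show (r • c) • x = algebraMap R Λ r • (c • x)
      rw [Algebra.smul_def, mul_smul]⟩
  haveI : Module.Finite R M := Module.Finite.trans Λ M
  haveI : IsNoetherian R M := inferInstance
  refine ⟨n, ?_⟩
  set P : Submodule Λ M := mPow R Λ n with hP
  set P' : Submodule R M := P.restrictScalars R with hP'
  set Q : Submodule R M := maximalIdeal R • P' with hQ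
  have hQΛ : ∀ (c : Λ), ∀ x ∈ Q, c • x ∈ Q := by
    intro c x hx
    refine Submodule.smul_induction_on hx ?_ ?_
    · intro r hr y hy
      have h1 : c • (r • y) = r • (c • y) := central_smul R Λ r c y
      rw [h1]
      exact Submodule.smul_mem_smul hr (P.smul_mem c hy)
    · intro y z hy hz; rw [smul_add]; exact Q.add_mem hy hz
  let K : Submodule Λ M :=
    { carrier := Q
      add_mem' := fun h h' => Q.add_mem h h'
      zero_mem' := Q.zero_mem
      smul_mem' := fun c x hx => hQΛ c x hx }
  have hle : P' ≤ Q := by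
    intro x hx
    have hx' : x ∈ mSmul R Λ P := by rw [← hstab]; exact hx
    have hKle : mSmul R Λ P ≤ K := by
      rw [mSmul, Submodule.span_le]
      rintro y ⟨r, hr, z, hz, rfl⟩
      have hmem : r • z ∈ Q := Submodule.smul_mem_smul hr hz
      exact hmem
    exact hKle hx'
  have hbot := Submodule.eq_bot_of_le_smul_of_le_jacobson_bot (maximalIdeal R) P'
    (IsNoetherian.noetherian P') hle
    (by rw [IsLocalRing.jacobson_eq_maximalIdeal ⊥ bot_ne_top])
  exact (Submodule.restrictScalars_eq_bot_iff R Λ M).mp hbot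

/-- The inclusion of `X` as head coordinate. -/
def consMap (X : Type u) [AddCommGroup X] [Module Λ X] (k : ℕ) :
    X →ₗ[Λ] (Fin (k+1) → X) where
  toFun x := Fin.cons x 0
  map_add' x y := by
    funext j
    refine Fin.cases ?_ (fun i => ?_) j
    · simp
    · simp
  map_smul' c x := by
    funext j
    refine Fin.cases ?_ (fun i => ?_) j
    · simp
    · simp

/-- The projection forgetting the head coordinate. -/
def tailMap (X : Type u) [AddCommGroup X] [Module Λ X] (k : ℕ) :
    (Fin (k+1) → X) →ₗ[Λ] (Fin k → X) where
  toFun f := f ∘ Fin.succ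
  map_add' _ _ := rfl
  map_smul' _ _ := rfl

lemma consMap_apply (X : Type u) [AddCommGroup X] [Module Λ X] (k : ℕ) (x : X) :
    consMap Λ X k x = (Fin.cons x 0 : Fin (k+1) → X) := rfl

lemma tailMap_apply (X : Type u) [AddCommGroup X] [Module Λ X] (k : ℕ) (f : Fin (k+1) → X) :
    tailMap Λ X k f = f ∘ Fin.succ := rfl

lemma consMap_inj (X : Type u) [AddCommGroup X] [Module Λ X] (k : ℕ) :
    Function.Injective (consMap Λ X k) := by
  intro a b h
  have := congrFun h 0
  simpa [consMap] using this

lemma tailMap_surj (X : Type u) [AddCommGroup X] [Module Λ X] (k : ℕ) :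
    Function.Surjective (tailMap Λ X k) := by
  intro g
  refine ⟨Fin.cons 0 g, ?_⟩
  rw [tailMap_apply]
  funext j
  exact Fin.cons_succ _ _ _

lemma range_consMap (X : Type u) [AddCommGroup X] [Module Λ X] (k : ℕ) :
    LinearMap.range (consMap Λ X k) = LinearMap.ker (tailMap Λ X k) := by
  ext f
  simp only [LinearMap.mem_range, LinearMap.mem_ker]
  constructor
  · rintro ⟨x, rfl⟩
    rw [tailMap_apply, consMap_apply]
    funext j
    show (Fin.cons x 0 : Fin (k+1) → X) (Fin.succ j) = 0
    rw [Fin.cons_succ]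
    rfl
  · intro hf
    rw [tailMap_apply] at hf
    refine ⟨f 0, ?_⟩
    rw [consMap_apply]
    funext j
    refine Fin.cases ?_ (fun i => ?_) j
    · exact Fin.cons_zero _ _
    · show (Fin.cons (f 0) 0 : Fin (k+1) → X) (Fin.succ i) = f (Fin.succ i)
      rw [Fin.cons_succ]
      exact (congrFun hf i).symm

/-- quotient + extension closure gives closure under finite powers. -/
lemma pi_mem_of_mem (T : Set (ModuleCat.{u} Λ))
    (hquot : ∀ X ∈ T, ∀ Y : ModuleCat.{u} Λ, ∀ p : X →ₗ[Λ] Y, Function.Surjective p → Y ∈ T)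
    (hext : ∀ X ∈ T, ∀ Z ∈ T, ∀ Y : ModuleCat.{u} Λ, ∀ (i : X →ₗ[Λ] Y) (p : Y →ₗ[Λ] Z),
      Function.Injective i → Function.Surjective p →
      LinearMap.range i = LinearMap.ker p → Y ∈ T)
    {X : ModuleCat.{u} Λ} (hX : X ∈ T) :
    ∀ k : ℕ, ModuleCat.of Λ (Fin k → X) ∈ T := by
  intro k
  induction k with
  | zero =>
    haveI : Subsingleton (Fin 0 → X) := ⟨fun a b => funext fun i => i.elim0⟩
    exact hquot X hX (ModuleCat.of Λ (Fin 0 → X)) 0 (fun y => ⟨0, Subsingleton.elim _ _⟩)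
  | succ k ih =>
    exact hext X hX (ModuleCat.of Λ (Fin k → X)) ih (ModuleCat.of Λ (Fin (k+1) → X))
      (consMap Λ X k) (tailMap Λ X k) (consMap_inj Λ X k) (tailMap_surj Λ X k)
      (range_consMap Λ X k)

/-- The key lemma: a torsion class of `fl Λ` contained, on `m`-annihilated objects, in
another torsion class, is contained in it. -/
lemma subset_of_inter_subset {T₁ T₂ : Set (ModuleCat.{u} Λ)}
    (h₁ : IsTorsionClassFL Λ T₁) (h₂ : IsTorsionClassFL Λ T₂)
    (h : T₁ ∩ {X | AnnihilatedByM R Λ X} ⊆ T₂) : T₁ ⊆ T₂ := by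
  obtain ⟨hfl₁, hquot₁, hext₁⟩ := h₁
  obtain ⟨hfl₂, hquot₂, hext₂⟩ := h₂
  intro X hX
  obtain ⟨k, r, hr⟩ : ∃ (k : ℕ) (r : Fin k → R),
      Submodule.span R (Set.range r) = maximalIdeal R :=
    Submodule.fg_iff_exists_fin_generating_family.mp (IsNoetherian.noetherian (maximalIdeal R))
  set N : ℕ → Submodule Λ X := mPow R Λ with hN
  let C : ∀ i : ℕ, Submodule Λ ↥(N i) := fun i => (N (i+1)).comap (N i).subtype
  let L : ℕ → ModuleCat.{u} Λ := fun i => ModuleCat.of Λ (↥(N i) ⧸ C i)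
  have hsm_mem : ∀ (i : ℕ) (j : Fin k) (z : ↥(N i)),
      algebraMap R Λ (r j) • (z : X) ∈ N (i+1) := fun i j z =>
    smul_mem_mSmul R Λ (hr ▸ Submodule.subset_span ⟨j, rfl⟩) z.2
  -- each layer is annihilated by m
  have hann : ∀ i, AnnihilatedByM R Λ (L i) := by
    intro i s hs y
    obtain ⟨z, rfl⟩ := Submodule.Quotient.mk_surjective (C i) y
    show Submodule.Quotient.mk (algebraMap R Λ s • z) = (0 : ↥(N i) ⧸ C i)
    rw [Submodule.Quotient.mk_eq_zero]
    show ((algebraMap R Λ s • z : ↥(N i)) : X) ∈ N (i+1)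
    exact smul_mem_mSmul R Λ hs z.2
  -- each layer is in T₁
  have hlayer : ∀ i, L i ∈ T₁ := by
    intro i
    induction i with
    | zero =>
      refine hquot₁ X hX (L 0) ((C 0).mkQ ∘ₗ LinearMap.codRestrict (N 0) LinearMap.id
        (fun x => Submodule.mem_top)) ?_
      intro y
      obtain ⟨z, rfl⟩ := Submodule.Quotient.mk_surjective (C 0) y
      exact ⟨(z : X), by
        show Submodule.Quotient.mk _ = Submodule.Quotient.mk z
        congr 1⟩
    | succ i ih =>
      let sm : ∀ j : Fin k, ↥(N i) →ₗ[Λ] ↥(N (i+1)) := fun j =>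
        { toFun := fun z => ⟨algebraMap R Λ (r j) • (z : X), hsm_mem i j z⟩
          map_add' := fun a b => by ext; simp [smul_add]
          map_smul' := fun c a => by
            ext
            show algebraMap R Λ (r j) • (c • (a : X)) = c • (algebraMap R Λ (r j) • (a : X))
            rw [central_smul] }
      let f : ∀ j : Fin k, ↥(N i) →ₗ[Λ] (↥(N (i+1)) ⧸ C (i+1)) := fun j =>
        (C (i+1)).mkQ ∘ₗ sm j
      have hker : ∀ j, C i ≤ LinearMap.ker (f j) := by
        intro j z hz
        show Submodule.Quotient.mk (sm j z) = (0 : ↥(N (i+1)) ⧸ C (i+1))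
        rw [Submodule.Quotient.mk_eq_zero]
        show algebraMap R Λ (r j) • (z : X) ∈ N (i+2)
        exact smul_mem_mSmul R Λ (hr ▸ Submodule.subset_span ⟨j, rfl⟩) hz
      let g : (Fin k → (↥(N i) ⧸ C i)) →ₗ[Λ] (↥(N (i+1)) ⧸ C (i+1)) :=
        ∑ j, ((C i).liftQ (f j) (hker j)) ∘ₗ LinearMap.proj j
      have hgsurj : Function.Surjective g := by
        intro y
        obtain ⟨w, rfl⟩ := Submodule.Quotient.mk_surjective (C (i+1)) y
        obtain ⟨v, hv, hw⟩ := mSmul_rep R Λ hr (N i) w.2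
        refine ⟨fun j => Submodule.Quotient.mk ⟨v j, hv j⟩, ?_⟩
        have hgval : g (fun j => Submodule.Quotient.mk ⟨v j, hv j⟩)
            = ∑ j, Submodule.Quotient.mk (p := C (i+1)) (sm j ⟨v j, hv j⟩) := by
          simp only [g, LinearMap.sum_apply, LinearMap.coe_comp, Function.comp_apply]
          refine Finset.sum_congr rfl fun j _ => ?_
          rw [LinearMap.proj_apply]
          exact Submodule.liftQ_apply _ _ _
        rw [hgval]
        calc ∑ j, Submodule.Quotient.mk (p := C (i+1)) (sm j ⟨v j, hv j⟩)
            = (C (i+1)).mkQ (∑ j, sm j ⟨v j, hv j⟩) := by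
              rw [map_sum]
              rfl
          _ = Submodule.Quotient.mk w := by
              rw [Submodule.mkQ_apply]
              congr 1
              ext
              rw [Submodule.coe_sum]
              exact hw.symm
      exact hquot₁ (ModuleCat.of Λ (Fin k → (L i : Type u))) (pi_mem_of_mem Λ T₁ hquot₁ hext₁ ih k)
        (L (i+1)) g hgsurj
  have hlayer₂ : ∀ i, L i ∈ T₂ := fun i => h ⟨hlayer i, hann i⟩
  obtain ⟨n, hn⟩ := mPow_eq_bot R Λ (hfl₁ X hX)
  -- downward induction on the filtration
  have key : ∀ m : ℕ, ModuleCat.of Λ ↥(N (n - m)) ∈ T₂ := by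
    intro m
    induction m with
    | zero =>
      have hbot : N n = ⊥ := hn
      haveI hss : Subsingleton ↥(N n) := by
        constructor
        rintro ⟨a, ha⟩ ⟨b, hb⟩
        rw [hbot] at ha hb
        simp only [Submodule.mem_bot] at ha hb
        simp [ha, hb]
      haveI : Subsingleton ↑(ModuleCat.of Λ ↥(N n)) := hss
      simpa using hquot₂ (L 0) (hlayer₂ 0) (ModuleCat.of Λ ↥(N n)) 0
        (fun y => ⟨0, Subsingleton.elim _ _⟩)
    | succ m ih =>
      by_cases hm : n ≤ m
      · have he : n - (m+1) = n - m := by omega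
        rw [he]; exact ih
      · set i := n - (m + 1) with hi
        have he : n - m = i + 1 := by omega
        rw [he] at ih
        exact hext₂ (ModuleCat.of Λ ↥(N (i+1))) ih (L i) (hlayer₂ i)
          (ModuleCat.of Λ ↥(N i))
          (Submodule.inclusion (mSmul_le R Λ (N i)))
          ((C i).mkQ)
          (Submodule.inclusion_injective _)
          (Submodule.Quotient.mk_surjective _)
          (by rw [Submodule.ker_mkQ]; exact Submodule.range_inclusion _ _ _)
  have h0 := key n
  rw [Nat.sub_self] at h0
  refine hquot₂ (ModuleCat.of Λ ↥(N 0)) h0 X ((N 0).subtype) ?_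
  intro x
  exact ⟨⟨x, Submodule.mem_top⟩, rfl⟩

/-- the lift of a torsion class `T'` of `mod (Λ/mΛ)` is a torsion class of `fl Λ`
whose intersection with `mod (Λ/mΛ)` is `T'`. -/
lemma lift_works (T' : Set (ModuleCat.{u} Λ)) (hT' : IsTorsionClassModQuot R Λ T') :
    IsTorsionClassFL Λ
      {X : ModuleCat.{u} Λ | IsFiniteLength Λ X ∧
        ModuleCat.of Λ (X ⧸ mTop R Λ X) ∈ T'} ∧
    {X : ModuleCat.{u} Λ | IsFiniteLength Λ X ∧ ModuleCat.of Λ (X ⧸ mTop R Λ X) ∈ T'}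
      ∩ {X | AnnihilatedByM R Λ X} = T' := by
  obtain ⟨hfin', hquot', hext'⟩ := hT'
  constructor
  · refine ⟨fun X hX => hX.1, ?_, ?_⟩
    · -- closed under quotients
      rintro X ⟨hXfl, hXq⟩ Y p hp
      refine ⟨?_, ?_⟩
      · obtain ⟨hnoe, hart⟩ := isFiniteLength_iff_isNoetherian_isArtinian.mp hXfl
        haveI := hnoe; haveI := hart
        haveI := isNoetherian_of_surjective (M := X) p (LinearMap.range_eq_top.mpr hp)
        haveI := isArtinian_of_surjective (M := X) p hp
        exact isFiniteLength_iff_isNoetherian_isArtinian.mpr ⟨‹_›, ‹_›⟩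
      · refine hquot' (ModuleCat.of Λ (X ⧸ mTop R Λ X)) hXq (ModuleCat.of Λ (Y ⧸ mTop R Λ Y))
          (Submodule.mapQ _ _ p (mTop_le_comap R Λ p)) ?_
        intro y
        obtain ⟨z, rfl⟩ := Submodule.Quotient.mk_surjective _ y
        obtain ⟨x, rfl⟩ := hp z
        exact ⟨Submodule.Quotient.mk x, Submodule.mapQ_apply _ _ p x⟩
    · -- closed under extensions
      rintro X ⟨hXfl, hXq⟩ Z ⟨hZfl, hZq⟩ Y i p hi hp hrk
      have hrange_le_ker : ∀ x : X, p (i x) = 0 := fun x =>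
        (hrk ▸ LinearMap.mem_range_self i x : i x ∈ LinearMap.ker p)
      refine ⟨?_, ?_⟩
      · obtain ⟨hnoe₁, hart₁⟩ := isFiniteLength_iff_isNoetherian_isArtinian.mp hXfl
        obtain ⟨hnoe₂, hart₂⟩ := isFiniteLength_iff_isNoetherian_isArtinian.mp hZfl
        haveI := hnoe₁; haveI := hart₁; haveI := hnoe₂; haveI := hart₂
        haveI := isNoetherian_of_range_eq_ker i p hrk
        haveI := isArtinian_of_range_eq_ker i p hrk
        exact isFiniteLength_iff_isNoetherian_isArtinian.mpr ⟨‹_›, ‹_›⟩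
      · set i' : (X : Type u) →ₗ[Λ] ((Y : Type u) ⧸ mTop R Λ Y) :=
          (mTop R Λ Y).mkQ ∘ₗ i with hi'
        have hker_i' : mTop R Λ X ≤ LinearMap.ker i' := by
          intro x hx
          have hmem : i x ∈ mTop R Λ Y := mTop_le_comap R Λ i hx
          show (mTop R Λ Y).mkQ (i x) = 0
          rwa [Submodule.mkQ_apply, Submodule.Quotient.mk_eq_zero]
        set j : ((X : Type u) ⧸ mTop R Λ X) →ₗ[Λ] ((Y : Type u) ⧸ mTop R Λ Y) :=
          (mTop R Λ X).liftQ i' hker_i' with hj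
        set A : Submodule Λ ((Y : Type u) ⧸ mTop R Λ Y) := LinearMap.range j with hA
        set qp : ((Y : Type u) ⧸ mTop R Λ Y) →ₗ[Λ] ((Z : Type u) ⧸ mTop R Λ Z) :=
          Submodule.mapQ _ _ p (mTop_le_comap R Λ p) with hqp
        have hA_mem : ModuleCat.of Λ ↥A ∈ T' :=
          hquot' (ModuleCat.of Λ (X ⧸ mTop R Λ X)) hXq (ModuleCat.of Λ ↥A)
            j.rangeRestrict j.surjective_rangeRestrict
        have hAker : A = LinearMap.ker qp := by
          ext y'
          constructor
          · rintro ⟨x', rfl⟩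
            obtain ⟨x, rfl⟩ := Submodule.Quotient.mk_surjective _ x'
            show qp (j (Submodule.Quotient.mk x)) = 0
            have h1 : j (Submodule.Quotient.mk x) = Submodule.Quotient.mk (i x) :=
              Submodule.liftQ_apply _ i' x
            rw [h1, hqp, Submodule.mapQ_apply, hrange_le_ker x, Submodule.Quotient.mk_zero]
          · intro hy
            obtain ⟨y, rfl⟩ := Submodule.Quotient.mk_surjective _ y'
            have h2 : p y ∈ mTop R Λ Z := by
              have h3 : qp (Submodule.Quotient.mk y) = Submodule.Quotient.mk (p y) :=
                Submodule.mapQ_apply _ _ p y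
              have h4 : qp (Submodule.Quotient.mk y) = 0 := hy
              rw [h3] at h4
              rwa [Submodule.Quotient.mk_eq_zero] at h4
            rw [← mTop_map R Λ p hp] at h2
            obtain ⟨w, hw, hwp⟩ := h2
            have h5 : y - w ∈ LinearMap.ker p := by
              rw [LinearMap.mem_ker, map_sub, hwp, sub_self]
            rw [← hrk] at h5
            obtain ⟨x, hx⟩ := h5
            refine ⟨Submodule.Quotient.mk x, ?_⟩
            have h6 : j (Submodule.Quotient.mk x) = Submodule.Quotient.mk (i x) :=
              Submodule.liftQ_apply _ i' x
            rw [h6, hx]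
            exact (Submodule.Quotient.eq _).mpr (by simpa using Submodule.neg_mem _ hw)
        refine hext' (ModuleCat.of Λ ↥A) hA_mem (ModuleCat.of Λ (Z ⧸ mTop R Λ Z)) hZq
          (ModuleCat.of Λ (Y ⧸ mTop R Λ Y))
          (by intro r hr y; exact ann_mQuot R Λ r hr y)
          A.subtype qp (Submodule.injective_subtype A) ?_ ?_
        · intro z
          obtain ⟨w, rfl⟩ := Submodule.Quotient.mk_surjective _ z
          obtain ⟨y, rfl⟩ := hp w
          exact ⟨Submodule.Quotient.mk y, Submodule.mapQ_apply _ _ p y⟩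
        · rw [Submodule.range_subtype, hAker]
  · ext X
    constructor
    · rintro ⟨⟨hXfl, hXq⟩, hXa⟩
      have hbot : mTop R Λ X = ⊥ :=
        Submodule.span_eq_bot.mpr (by rintro y ⟨r, hr, x, -, rfl⟩; exact hXa r hr x)
      refine hquot' (ModuleCat.of Λ (X ⧸ mTop R Λ X)) hXq X
        ((mTop R Λ X).liftQ LinearMap.id (by rw [hbot]; exact bot_le)) ?_
      intro x
      exact ⟨Submodule.Quotient.mk x, rfl⟩
    · intro hX'
      obtain ⟨hfin, hann⟩ := hfin' X hX'
      refine ⟨⟨?_, ?_⟩, hann⟩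
      · haveI := hfin
        exact isFiniteLength_of_ann R Λ hann
      · exact hquot' X hX' (ModuleCat.of Λ (X ⧸ mTop R Λ X)) (mTop R Λ X).mkQ
          (Submodule.Quotient.mk_surjective _)

end TCAux

/-- **Torsion classes of finite length modules are controlled by `Λ/mΛ`.**
Let `R` be a commutative local noetherian ring with maximal ideal `m` and `Λ` a
module-finite `R`-algebra.  The map `T ↦ T ∩ mod(Λ/mΛ)` is a bijection from the
set of torsion classes of `fl Λ` onto the set of torsion classes of `mod(Λ/mΛ)`
(the inverse being `T' ↦ T_Λ(T')`, the smallest torsion class containing `T'`). -/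
theorem torsionClassFL_equiv_torsionClassModQuot :
    Set.BijOn (fun T : Set (ModuleCat.{u} Λ) => T ∩ {X | AnnihilatedByM R Λ X})
      {T | IsTorsionClassFL Λ T} {T | IsTorsionClassModQuot R Λ T} := by
  refine ⟨?_, ?_, ?_⟩
  · -- MapsTo
    rintro T ⟨hfl, hquot, hext⟩
    refine ⟨?_, ?_, ?_⟩
    · rintro X ⟨hXT, hXa⟩
      obtain ⟨hnoe, -⟩ := isFiniteLength_iff_isNoetherian_isArtinian.mp (hfl X hXT)
      haveI := hnoe
      exact ⟨inferInstance, hXa⟩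
    · rintro X ⟨hXT, hXa⟩ Y p hp
      refine ⟨hquot X hXT Y p hp, ?_⟩
      intro r hr y
      obtain ⟨x, rfl⟩ := hp y
      rw [← p.map_smul, hXa r hr x, p.map_zero]
    · rintro X ⟨hXT, -⟩ Z ⟨hZT, -⟩ Y hYa i p hi hp hr
      exact ⟨hext X hXT Z hZT Y i p hi hp hr, hYa⟩
  · -- InjOn
    intro T₁ h₁ T₂ h₂ heq
    have heq' : T₁ ∩ {X | AnnihilatedByM R Λ X} = T₂ ∩ {X | AnnihilatedByM R Λ X} := heq
    refine Set.Subset.antisymm ?_ ?_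
    · exact subset_of_inter_subset R Λ h₁ h₂ (heq' ▸ Set.inter_subset_left)
    · exact subset_of_inter_subset R Λ h₂ h₁ (heq'.symm ▸ Set.inter_subset_left)
  · -- SurjOn
    intro T' hT'
    obtain ⟨hTC, himg⟩ := lift_works R Λ T' hT'
    exact ⟨_, hTC, himg⟩
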